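/- arXiv:1401.4775 — 7 statements merged into one kernel-verified Lean document; each statement's English description precedes it below -/
import Mathlib

section
/- Let X be a Hausdorff, locally compact topological space. Suppose X contains a nontrivial convergent sequence, i.e., there exist a point x₀ ∈ X and a sequence (x_n) in X with x_n ≠ x₀ for all n and x_n → x₀. Then X is not an F-space: there exists a bounded continuous real-valued function f on X such that there is no bounded continuous real-valued function k on X with f = k·|f|. -/
open Filter Set

/-- A Hausdorff locally compact space containing a nontrivial convergent sequence
is not an F-space. -/
theorem stmt_0 {X : Type*} [TopologicalSpace X] [T2Space X] [LocallyCompactSpace X]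
    (x₀ : X) (x : ℕ → X) (hx : ∀ n, x n ≠ x₀)
    (hconv : Filter.Tendsto x Filter.atTop (nhds x₀)) :
    ∃ f : X → ℝ, Continuous f ∧ Bornology.IsBounded (Set.range f) ∧
      ¬ ∃ k : X → ℝ, Continuous k ∧ Bornology.IsBounded (Set.range k) ∧
        f = fun y => k y * |f y| := by
  -- key step lemma
  have key : ∀ (n : ℕ) (G : Set X), IsOpen G → x₀ ∈ G →
      ∃ (m : ℕ) (U G' : Set X), n ≤ m ∧ x m ∈ U ∧ IsOpen U ∧ U ⊆ G ∧
        IsOpen G' ∧ x₀ ∈ G' ∧ G' ⊆ G ∧ Disjoint U G' := by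
    intro n G hG hx₀G
    obtain ⟨mm, h1, h2⟩ :=
      ((hconv.eventually (hG.mem_nhds hx₀G)).and (Filter.eventually_ge_atTop n)).exists
    obtain ⟨V, W, hV, hW, hxV, hx₀W, hVW⟩ := t2_separation (hx mm)
    exact ⟨mm, V ∩ G, W ∩ G, h2, ⟨hxV, h1⟩, hV.inter hG, Set.inter_subset_right,
      hW.inter hG, ⟨hx₀W, hx₀G⟩, Set.inter_subset_right,
      hVW.mono Set.inter_subset_left Set.inter_subset_left⟩
  choose m U G' hm hxU hUopen hUG hG'open hx₀G' hG'G hdisj using key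
  -- recursive construction of nested open sets and points
  let chain : ℕ → {G : Set X // IsOpen G ∧ x₀ ∈ G} := fun k =>
    Nat.rec ⟨Set.univ, isOpen_univ, Set.mem_univ _⟩
      (fun k Gk => ⟨G' k Gk.1 Gk.2.1 Gk.2.2, hG'open k Gk.1 Gk.2.1 Gk.2.2,
        hx₀G' k Gk.1 Gk.2.1 Gk.2.2⟩) k
  let p : ℕ → ℕ := fun k => m k (chain k).1 (chain k).2.1 (chain k).2.2
  let Uk : ℕ → Set X := fun k => U k (chain k).1 (chain k).2.1 (chain k).2.2
  have hpk : ∀ k, k ≤ p k := fun k => hm k _ _ _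
  have hpU : ∀ k, x (p k) ∈ Uk k := fun k => hxU k _ _ _
  have hUkopen : ∀ k, IsOpen (Uk k) := fun k => hUopen k _ _ _
  have hnested : ∀ k, (chain (k + 1)).1 ⊆ (chain k).1 := fun k => hG'G k _ _ _
  have hUdisjnext : ∀ k, Disjoint (Uk k) (chain (k + 1)).1 := fun k => hdisj k _ _ _
  have hUsub : ∀ k, Uk k ⊆ (chain k).1 := fun k => hUG k _ _ _
  have hanti : ∀ j k, j ≤ k → (chain k).1 ⊆ (chain j).1 := by
    intro j k hjk
    induction hjk with
    | refl => exact subset_rfl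
    | step _ ih => exact (hnested _).trans ih
  have hUdisj : ∀ j k, j ≠ k → Disjoint (Uk j) (Uk k) := by
    have main : ∀ j k, j < k → Disjoint (Uk j) (Uk k) := by
      intro j k hjk
      exact (hUdisjnext j).mono_right ((hUsub k).trans (hanti (j + 1) k hjk))
    intro j k hjk
    rcases hjk.lt_or_gt with h | h
    · exact main j k h
    · exact (main k j h).symm
  -- subsequence tends to x₀
  have hptend : Filter.Tendsto (fun k => x (p k)) Filter.atTop (nhds x₀) :=
    hconv.comp (tendsto_atTop_mono hpk tendsto_id)
  -- bump functions
  have hbump : ∀ k, ∃ φ : C(X, ℝ), φ (x (p k)) = 1 ∧ (∀ y, y ∉ Uk k → φ y = 0) ∧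
      ∀ y, φ y ∈ Set.Icc (0 : ℝ) 1 := by
    intro k
    obtain ⟨φ, h1, h0, _, hmem⟩ := exists_continuous_one_zero_of_isCompact
      (isCompact_singleton (x := x (p k))) (hUkopen k).isClosed_compl
      (Set.disjoint_singleton_left.mpr (fun h => h (hpU k)))
    exact ⟨φ, h1 rfl, fun y hy => h0 hy, hmem⟩
  choose φ hφ1 hφ0 hφmem using hbump
  -- the function f
  set f : X → ℝ := fun y => ∑' k, (-1 / 2 : ℝ) ^ k * φ k y with hfdef
  have hb : ∀ k y, ‖(-1 / 2 : ℝ) ^ k * φ k y‖ ≤ ((1 : ℝ) / 2) ^ k := by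
    intro k y
    have h1 : ‖(-1 / 2 : ℝ) ^ k‖ = ((1 : ℝ) / 2) ^ k := by
      rw [norm_pow]; norm_num
    have h2 : ‖φ k y‖ ≤ 1 := by
      rw [Real.norm_eq_abs, abs_of_nonneg (hφmem k y).1]
      exact (hφmem k y).2
    calc ‖(-1 / 2 : ℝ) ^ k * φ k y‖ = ((1 : ℝ) / 2) ^ k * ‖φ k y‖ := by
          rw [norm_mul, h1]
      _ ≤ ((1 : ℝ) / 2) ^ k * 1 := by
          exact mul_le_mul_of_nonneg_left h2 (by positivity)
      _ = ((1 : ℝ) / 2) ^ k := mul_one _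
  have hfcont : Continuous f :=
    continuous_tsum (fun k => continuous_const.mul (φ k).continuous)
      summable_geometric_two hb
  have hfbound : ∀ y, ‖f y‖ ≤ 2 := by
    intro y
    have := tsum_of_norm_bounded summable_geometric_two.hasSum (fun k => hb k y)
    rwa [tsum_geometric_two] at this
  -- value of f at the chosen points
  have hfval : ∀ j, f (x (p j)) = (-1 / 2 : ℝ) ^ j := by
    intro j
    have hzero : ∀ k, k ≠ j → (-1 / 2 : ℝ) ^ k * φ k (x (p j)) = 0 := by
      intro k hk
      have : x (p j) ∉ Uk k :=
        fun hmem => (hUdisj k j hk).ne_of_mem hmem (hpU j) rfl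
      rw [hφ0 k _ this, mul_zero]
    calc f (x (p j)) = ∑' k, (-1 / 2 : ℝ) ^ k * φ k (x (p j)) := rfl
      _ = (-1 / 2 : ℝ) ^ j * φ j (x (p j)) := tsum_eq_single j hzero
      _ = (-1 / 2 : ℝ) ^ j := by rw [hφ1, mul_one]
  refine ⟨f, hfcont, ?_, ?_⟩
  · exact isBounded_iff_forall_norm_le.mpr ⟨2, by rintro _ ⟨y, rfl⟩; exact hfbound y⟩
  · rintro ⟨g, hgcont, -, hgeq⟩
    have hgval : ∀ j, g (x (p j)) = (-1 : ℝ) ^ j := by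
      intro j
      have h1 : f (x (p j)) = g (x (p j)) * |f (x (p j))| := congrFun hgeq _
      rw [hfval] at h1
      have habs : |(-1 / 2 : ℝ) ^ j| = ((1 : ℝ) / 2) ^ j := by
        have h : |(-1 / 2 : ℝ)| = (1 : ℝ) / 2 := by norm_num
        rw [abs_pow, h]
      have hsplit : (-1 / 2 : ℝ) ^ j = (-1 : ℝ) ^ j * ((1 : ℝ) / 2) ^ j := by
        rw [← mul_pow]; norm_num
      rw [habs, hsplit] at h1
      exact (mul_right_cancel₀ (by positivity) h1.symm)
    have heventend : Filter.Tendsto (fun j => x (p (2 * j))) Filter.atTop (nhds x₀) :=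
      hptend.comp (tendsto_atTop_mono (fun j => by simp only [id_eq]; omega) tendsto_id)
    have hoddtend : Filter.Tendsto (fun j => x (p (2 * j + 1))) Filter.atTop (nhds x₀) :=
      hptend.comp (tendsto_atTop_mono (fun j => by simp only [id_eq]; omega) tendsto_id)
    have heven : g x₀ = 1 := by
      have h1 : Filter.Tendsto (fun j => g (x (p (2 * j)))) Filter.atTop (nhds (g x₀)) :=
        (hgcont.tendsto x₀).comp heventend
      have h2 : (fun j => g (x (p (2 * j)))) = fun _ => (1 : ℝ) := by
        funext j
        rw [hgval, pow_mul]
        norm_num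
      rw [h2] at h1
      exact tendsto_nhds_unique h1 tendsto_const_nhds
    have hodd : g x₀ = -1 := by
      have h1 : Filter.Tendsto (fun j => g (x (p (2 * j + 1)))) Filter.atTop (nhds (g x₀)) :=
        (hgcont.tendsto x₀).comp hoddtend
      have h2 : (fun j => g (x (p (2 * j + 1)))) = fun _ => (-1 : ℝ) := by
        funext j
        rw [hgval, pow_succ, pow_mul]
        norm_num
      rw [h2] at h1
      exact tendsto_nhds_unique h1 tendsto_const_nhds
    rw [heven] at hodd
    norm_num at hodd
end

section
/- Let X be a compact Hausdorff space. Then X is an F-space if and only if for all σ-compact subsets A and B of X satisfying cl(A) ∩ B = ∅ and A ∩ cl(B) = ∅, one has cl(A) ∩ cl(B) = ∅ (where cl denotes closure in X). -/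
open Set

/-- A compact Hausdorff space is an F-space iff for all σ-compact subsets `A`, `B`
with `closure A ∩ B = ∅` and `A ∩ closure B = ∅`, one has `closure A ∩ closure B = ∅`. -/
theorem stmt_4 {X : Type*} [TopologicalSpace X] [CompactSpace X] [T2Space X] :
    (∀ f : X → ℝ, Continuous f → Bornology.IsBounded (Set.range f) →
      ∃ k : X → ℝ, Continuous k ∧ Bornology.IsBounded (Set.range k) ∧
        f = fun y => k y * |f y|) ↔
    (∀ A B : Set X,
      (∃ K : ℕ → Set X, (∀ n, IsCompact (K n)) ∧ A = ⋃ n, K n) →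
      (∃ K : ℕ → Set X, (∀ n, IsCompact (K n)) ∧ B = ⋃ n, K n) →
      closure A ∩ B = ∅ → A ∩ closure B = ∅ → closure A ∩ closure B = ∅) := by
  constructor
  · rintro hF A B ⟨K, hK, rfl⟩ ⟨L, hL, rfl⟩ hAB hBA
    set A := ⋃ n, K n
    set B := ⋃ n, L n
    -- Urysohn functions
    have hdA : ∀ n, Disjoint (closure B) (K n) := by
      intro n
      rw [Set.disjoint_iff_inter_eq_empty, Set.inter_comm]
      exact Set.eq_empty_of_subset_empty (hBA ▸ Set.inter_subset_inter_left _
        (Set.subset_iUnion K n))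
    have hdB : ∀ n, Disjoint (closure A) (L n) := by
      intro n
      rw [Set.disjoint_iff_inter_eq_empty, Set.inter_comm]
      rw [Set.inter_comm] at hAB
      exact Set.eq_empty_of_subset_empty (hAB ▸ Set.inter_subset_inter_left _
        (Set.subset_iUnion L n))
    choose F hF0 hF1 hF01 using fun n =>
      exists_continuous_zero_one_of_isClosed isClosed_closure (hK n).isClosed (hdA n)
    choose G hG0 hG1 hG01 using fun n =>
      exists_continuous_zero_one_of_isClosed isClosed_closure (hL n).isClosed (hdB n)
    -- the series
    set g : ℕ → X → ℝ := fun n x => (1/2 : ℝ)^n * (F n x - G n x) with hg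
    have hbound : ∀ n x, ‖g n x‖ ≤ (1/2 : ℝ)^n := by
      intro n x
      have h1 := hF01 n x
      have h2 := hG01 n x
      simp only [hg, norm_mul, norm_pow, Real.norm_ofNat, Real.norm_eq_abs]
      rw [abs_of_nonneg (by norm_num : (0:ℝ) ≤ 1/2)]
      calc (1/2:ℝ)^n * |F n x - G n x| ≤ (1/2:ℝ)^n * 1 := by
            apply mul_le_mul_of_nonneg_left _ (by positivity)
            rw [abs_sub_le_iff]
            constructor <;> linarith [h1.1, h1.2, h2.1, h2.2]
        _ = (1/2:ℝ)^n := mul_one _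
    have hsumgeo : Summable (fun n : ℕ => (1/2:ℝ)^n) :=
      summable_geometric_of_lt_one (by norm_num) (by norm_num)
    have hsum : ∀ x, Summable (fun n => g n x) := fun x =>
      Summable.of_norm_bounded hsumgeo (fun n => hbound n x)
    set f : X → ℝ := fun x => ∑' n, g n x with hf
    have hfc : Continuous f :=
      continuous_tsum (fun n => continuous_const.mul ((F n).continuous.sub (G n).continuous))
        hsumgeo hbound
    have hfb : Bornology.IsBounded (Set.range f) :=
      (isCompact_range hfc).isBounded
    obtain ⟨k, hkc, _, hfk⟩ := hF f hfc hfb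
    -- f positive on A
    have hfposA : ∀ x ∈ A, 0 < f x := by
      intro x hx
      obtain ⟨m, hm⟩ := Set.mem_iUnion.1 hx
      have hxA : x ∈ closure A := subset_closure hx
      have hGz : ∀ n, G n x = 0 := fun n => hG0 n hxA
      have hterm : ∀ n, 0 ≤ g n x := by
        intro n
        simp only [hg, hGz n, sub_zero]
        exact mul_nonneg (by positivity) (hF01 n x).1
      have hpos : 0 < g m x := by
        simp only [hg, hGz m, sub_zero, hF1 m hm]
        norm_num
      exact Summable.tsum_pos (hsum x) hterm m hpos
    have hfnegB : ∀ x ∈ B, f x < 0 := by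
      intro x hx
      obtain ⟨m, hm⟩ := Set.mem_iUnion.1 hx
      have hxB : x ∈ closure B := subset_closure hx
      have hFz : ∀ n, F n x = 0 := fun n => hF0 n hxB
      have hterm : ∀ n, 0 ≤ -g n x := by
        intro n
        simp only [hg, hFz n, zero_sub, mul_neg, neg_neg]
        exact mul_nonneg (by positivity) (hG01 n x).1
      have hpos : 0 < -g m x := by
        simp only [hg, hFz m, zero_sub, hG1 m hm, mul_neg, neg_neg]
        norm_num
      have : 0 < ∑' n, -g n x := Summable.tsum_pos ((hsum x).neg) hterm m hpos
      rw [tsum_neg] at this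
      linarith
    -- k = 1 on closure A, k = -1 on closure B
    have hk1 : closure A ⊆ k ⁻¹' {1} := by
      apply closure_minimal _ (isClosed_singleton.preimage hkc)
      intro x hx
      have hpos := hfposA x hx
      have := congrFun hfk x
      simp only [Set.mem_preimage, Set.mem_singleton_iff]
      rw [abs_of_pos hpos] at this
      have := mul_right_cancel₀ (ne_of_gt hpos) (this.symm.trans (one_mul (f x)).symm)
      linarith
    have hk2 : closure B ⊆ k ⁻¹' {-1} := by
      apply closure_minimal _ (isClosed_singleton.preimage hkc)
      intro x hx
      have hneg := hfnegB x hx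
      have hcf := congrFun hfk x
      simp only [Set.mem_preimage, Set.mem_singleton_iff]
      rw [abs_of_neg hneg] at hcf
      have h : k x * (-f x) = -1 * (-f x) := by linarith
      have := mul_right_cancel₀ (by linarith : -f x ≠ 0) h
      linarith
    ext x
    simp only [Set.mem_inter_iff, Set.mem_empty_iff_false, iff_false, not_and]
    intro h1 h2
    have e1 := hk1 h1
    have e2 := hk2 h2
    simp only [Set.mem_preimage, Set.mem_singleton_iff] at e1 e2
    rw [e1] at e2
    norm_num at e2
  · intro h f hfc hfb
    set A := {x | 0 < f x} with hA
    set B := {x | f x < 0} with hB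
    have hclA : closure A ⊆ {x | 0 ≤ f x} :=
      closure_minimal (fun x (hx : 0 < f x) => le_of_lt hx) (isClosed_le continuous_const hfc)
    have hclB : closure B ⊆ {x | f x ≤ 0} :=
      closure_minimal (fun x (hx : f x < 0) => le_of_lt hx) (isClosed_le hfc continuous_const)
    have hAs : ∃ K : ℕ → Set X, (∀ n, IsCompact (K n)) ∧ A = ⋃ n, K n := by
      refine ⟨fun n => {x | 1/(n+1 : ℝ) ≤ f x}, fun n =>
        ((isClosed_le continuous_const hfc)).isCompact, ?_⟩
      ext x
      simp only [hA, Set.mem_setOf_eq, Set.mem_iUnion]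
      constructor
      · intro hx
        obtain ⟨n, hn⟩ := exists_nat_one_div_lt hx
        exact ⟨n, le_of_lt hn⟩
      · rintro ⟨n, hn⟩
        exact lt_of_lt_of_le (by positivity) hn
    have hBs : ∃ K : ℕ → Set X, (∀ n, IsCompact (K n)) ∧ B = ⋃ n, K n := by
      refine ⟨fun n => {x | f x ≤ -(1/(n+1 : ℝ))}, fun n =>
        ((isClosed_le hfc continuous_const)).isCompact, ?_⟩
      ext x
      simp only [hB, Set.mem_setOf_eq, Set.mem_iUnion]
      constructor
      · intro hx
        obtain ⟨n, hn⟩ := exists_nat_one_div_lt (neg_pos.2 hx)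
        exact ⟨n, by linarith⟩
      · rintro ⟨n, hn⟩
        have : (0:ℝ) < 1/(n+1 : ℝ) := by positivity
        linarith
    have h1 : closure A ∩ B = ∅ := by
      ext x
      simp only [Set.mem_inter_iff, Set.mem_empty_iff_false, iff_false, not_and]
      intro hx hxB
      exact absurd (show f x < 0 from hxB) (not_lt.2 (hclA hx : 0 ≤ f x))
    have h2 : A ∩ closure B = ∅ := by
      ext x
      simp only [Set.mem_inter_iff, Set.mem_empty_iff_false, iff_false, not_and]
      intro hx hxB
      exact absurd (show 0 < f x from hx) (not_lt.2 (hclB hxB : f x ≤ 0))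
    have hdisj := h A B hAs hBs h1 h2
    obtain ⟨g, hg0, hg1, hg01⟩ := exists_continuous_zero_one_of_isClosed
      isClosed_closure isClosed_closure (Set.disjoint_iff_inter_eq_empty.2 hdisj)
    set k : X → ℝ := fun x => 1 - 2 * g x with hk
    refine ⟨k, by continuity, ?_, ?_⟩
    · apply (Metric.isBounded_Icc (-1 : ℝ) 3).subset
      rintro _ ⟨x, rfl⟩
      have := hg01 x
      constructor <;> simp only [hk] <;> [linarith [this.2]; linarith [this.1]]
    · funext x
      rcases lt_trichotomy (f x) 0 with hx | hx | hx
      · have hxB : x ∈ closure B := subset_closure (show x ∈ B from hx)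
        have hgx : g x = 1 := hg1 hxB
        simp only [hk]
        rw [hgx, abs_of_neg hx]
        ring
      · simp [hx]
      · have hxA : x ∈ closure A := subset_closure (show x ∈ A from hx)
        have hgx : g x = 0 := hg0 hxA
        simp only [hk]
        rw [hgx, abs_of_pos hx]
        ring
end

section
/- Let X be a discrete topological space and let βX denote its Stone–Čech compactification. Then every compact subset K of βX, equipped with the subspace topology, is an F-space. -/
open Set

/-- Every compact subset of the Stone–Čech compactification of a discrete space
is an F-space. -/
theorem stmt_5 {X : Type*} [TopologicalSpace X] [DiscreteTopology X]
    (K : Set (StoneCech X)) (hK : IsCompact K) :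
    ∀ f : K → ℝ, Continuous f → Bornology.IsBounded (Set.range f) →
      ∃ k : K → ℝ, Continuous k ∧ Bornology.IsBounded (Set.range k) ∧
        f = fun y => k y * |f y| := by
  haveI : ExtremallyDisconnected (StoneCech X) :=
    CompactT2.Projective.extremallyDisconnected StoneCech.projective
  intro f hf _
  -- Tietze extension of f to all of βX
  obtain ⟨F, hF⟩ := ContinuousMap.exists_restrict_eq (Y := ℝ) hK.isClosed ⟨f, hf⟩
  have hFval : ∀ y : K, F y = f y := fun y => DFunLike.congr_fun hF y
  set U : Set (StoneCech X) := {x | 0 < F x} with hU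
  have hUopen : IsOpen U := isOpen_lt continuous_const F.continuous
  have hclopen : IsClopen (closure U) :=
    ⟨isClosed_closure, ExtremallyDisconnected.open_closure U hUopen⟩
  classical
  set G : StoneCech X → ℝ := fun x => if x ∈ closure U then 1 else -1 with hG
  have hGcont : Continuous G := by
    have : G = (closure U).piecewise (fun _ => (1:ℝ)) (fun _ => -1) := rfl
    rw [this]
    exact continuous_const.piecewise
      (by simp [hclopen.frontier_eq]) continuous_const
  have key : ∀ x, F x = G x * |F x| := by
    intro x
    by_cases hx : x ∈ closure U
    · have hle : (0:ℝ) ≤ F x := by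
        have hsub : closure U ⊆ {x | 0 ≤ F x} :=
          closure_minimal (fun z hz => show 0 ≤ F z from le_of_lt hz)
            (isClosed_le continuous_const F.continuous)
        exact hsub hx
      rw [abs_of_nonneg hle, hG]; simp [hx]
    · have hle : F x ≤ 0 := by
        by_contra h
        exact hx (subset_closure (lt_of_not_ge h))
      rw [abs_of_nonpos hle, hG]; simp [hx]
  refine ⟨fun y => G y, hGcont.comp continuous_subtype_val, ?_, ?_⟩
  · refine (Metric.isBounded_Icc (-1:ℝ) 1).subset ?_
    rintro _ ⟨y, rfl⟩
    by_cases hy : (y : StoneCech X) ∈ closure U <;> simp [hG, hy]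
  · funext y
    have := key y
    rw [hFval y] at this
    exact this
end

section
/- Let X be a discrete topological space and let βX denote its Stone–Čech compactification, with X identified with its canonical image in βX. Then the corona βX \ X, equipped with the subspace topology, is an F-space. -/
open Classical

/-- The corona `βX \ X` of the Stone–Čech compactification of a discrete space `X`
is an F-space. -/
theorem stmt_6 {X : Type*} [TopologicalSpace X] [DiscreteTopology X] :
    ∀ f : ((Set.range (stoneCechUnit : X → StoneCech X))ᶜ : Set (StoneCech X)) → ℝ,
      Continuous f → Bornology.IsBounded (Set.range f) →
      ∃ k : ((Set.range (stoneCechUnit : X → StoneCech X))ᶜ : Set (StoneCech X)) → ℝ,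
        Continuous k ∧ Bornology.IsBounded (Set.range k) ∧
        f = fun y => k y * |f y| := by
  intro f hf _hb
  haveI : T4Space X := by
    have : NormalSpace X := ⟨fun s t _ _ hst =>
      ⟨s, t, isOpen_discrete s, isOpen_discrete t, subset_rfl, subset_rfl, hst⟩⟩
    infer_instance
  have hinj : Function.Injective (stoneCechUnit : X → StoneCech X) :=
    injective_stoneCechUnit_of_t35Space
  -- each point of the image of X is isolated, so the range is open
  have hsingle : ∀ x : X, IsOpen ({stoneCechUnit x} : Set (StoneCech X)) := by
    intro x
    have hχ : Continuous (fun y : X => decide (y = x)) := continuous_of_discreteTopology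
    set G := stoneCechExtend hχ with hG
    have hGx : G (stoneCechUnit x) = true := by
      have := congrFun (stoneCechExtend_extends hχ) x
      exact this.trans (by simp)
    set U : Set (StoneCech X) := G ⁻¹' {true} with hU
    have hUopen : IsOpen U := (continuous_stoneCechExtend hχ).isOpen_preimage _ (isOpen_discrete _)
    have hxU : stoneCechUnit x ∈ U := hGx
    have hUS : U ∩ Set.range (stoneCechUnit : X → StoneCech X) ⊆ {stoneCechUnit x} := by
      rintro _ ⟨hz, y, rfl⟩
      have : G (stoneCechUnit y) = true := hz
      have hy : decide (y = x) = true := by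
        have := congrFun (stoneCechExtend_extends hχ) y
        rw [Function.comp_apply] at this
        rw [← this]; exact hz
      have : y = x := of_decide_eq_true hy
      simp [this]
    have hUsub : U ⊆ closure (U ∩ Set.range (stoneCechUnit : X → StoneCech X)) := by
      intro z hz
      rw [mem_closure_iff]
      intro o ho hzo
      obtain ⟨w, hw⟩ := denseRange_stoneCechUnit.inter_open_nonempty (o ∩ U)
        (ho.inter hUopen) ⟨z, hzo, hz⟩
      exact ⟨w, hw.1.1, hw.1.2, hw.2⟩
    have hUeq : U = {stoneCechUnit x} := by
      apply Set.Subset.antisymm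
      · intro z hz
        have := hUsub hz
        have h2 := closure_mono hUS this
        rwa [closure_singleton] at h2
      · intro z hz
        rw [Set.mem_singleton_iff] at hz
        subst hz; exact hxU
    rw [← hUeq]; exact hUopen
  have hSopen : IsOpen (Set.range (stoneCechUnit : X → StoneCech X)) := by
    rw [← Set.biUnion_of_singleton (Set.range (stoneCechUnit : X → StoneCech X))]
    apply isOpen_biUnion
    rintro _ ⟨x, rfl⟩
    exact hsingle x
  have hclosed : IsClosed ((Set.range (stoneCechUnit : X → StoneCech X))ᶜ : Set (StoneCech X)) :=
    hSopen.isClosed_compl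
  -- extend f to F on all of βX by Tietze
  obtain ⟨F, hF⟩ := ContinuousMap.exists_restrict_eq hclosed ⟨f, hf⟩
  have hFeq : ∀ y : ((Set.range (stoneCechUnit : X → StoneCech X))ᶜ : Set (StoneCech X)),
      F y = f y := fun y => congrFun (congrArg DFunLike.coe hF) y
  -- βX is extremally disconnected
  haveI : ExtremallyDisconnected (StoneCech X) :=
    CompactT2.Projective.extremallyDisconnected StoneCech.projective
  set N : Set (StoneCech X) := {x | F x < 0} with hN
  have hNopen : IsOpen N := isOpen_lt F.continuous continuous_const
  have hclop : IsClopen (closure N) :=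
    ⟨isClosed_closure, ExtremallyDisconnected.open_closure N hNopen⟩
  set K : StoneCech X → ℝ := fun x => if x ∈ closure N then (-1 : ℝ) else 1 with hK
  have hKcont : Continuous K := by
    apply continuous_if
    · intro a ha
      have he : {x : StoneCech X | x ∈ closure N} = closure N := rfl
      rw [he, hclop.frontier_eq] at ha
      exact absurd ha (Set.notMem_empty a)
    · exact continuousOn_const
    · exact continuousOn_const
  have hKval : ∀ x, F x = K x * |F x| := by
    intro x
    rcases lt_trichotomy (F x) 0 with h | h | h
    · have hx : x ∈ closure N := subset_closure h
      rw [hK]; simp only [hx, if_pos]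
      rw [abs_of_neg h]; ring
    · simp [h]
    · have hx : x ∉ closure N := by
        intro hc
        obtain ⟨z, hz1, hz2⟩ := mem_closure_iff.mp hc {y | 0 < F y}
          (isOpen_lt continuous_const F.continuous) h
        have hz3 : F z < 0 := hz2
        exact absurd hz1 (not_lt.mpr (le_of_lt hz3))
      rw [hK]; simp only [hx, if_neg, not_false_iff]
      rw [abs_of_pos h]; ring
  refine ⟨fun y => K y, hKcont.comp continuous_subtype_val, ?_, ?_⟩
  · apply Bornology.IsBounded.subset (Metric.isBounded_closedBall (x := (0:ℝ)) (r := 1))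
    rintro _ ⟨y, rfl⟩
    simp only [Metric.mem_closedBall, Real.dist_eq, sub_zero]
    by_cases h : (y : StoneCech X) ∈ closure N <;> simp [hK, h]
  · funext y
    have := hKval y
    rw [hFeq y] at this
    exact this
end

section
/- (Kakutani–Kodaira) Let G be a σ-compact, locally compact, Hausdorff topological group. For any sequence (U_n)_{n ≥ 0} of neighbourhoods of the identity of G, there exists a compact normal subgroup N of G contained in ⋂_{n ≥ 0} U_n such that the quotient group G/N is metrizable. -/
open Set Filter Topology Pointwise

/-- Uniform conjugation control: given a neighbourhood `W` of `1` and a compact set `K`,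
there is a neighbourhood `V` of `1` such that `g * x * g⁻¹ ∈ W` for all `g ∈ K`, `x ∈ V`. -/
theorem kk_conj_lemma {G : Type*} [TopologicalSpace G] [Group G] [IsTopologicalGroup G]
    {W : Set G} (hW : W ∈ 𝓝 (1 : G)) {K : Set G} (hK : IsCompact K) :
    ∃ V ∈ 𝓝 (1 : G), ∀ g ∈ K, ∀ x ∈ V, g * x * g⁻¹ ∈ W := by
  have hcont : Continuous fun p : G × G => p.1 * p.2 * p.1⁻¹ := by continuity
  have key : ∀ g : G, ∃ A ∈ 𝓝 g, ∃ V ∈ 𝓝 (1 : G), ∀ h ∈ A, ∀ x ∈ V, h * x * h⁻¹ ∈ W := by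
    intro g
    have h1 : (fun p : G × G => p.1 * p.2 * p.1⁻¹) ⁻¹' W ∈ 𝓝 (g, 1) := by
      apply hcont.continuousAt.preimage_mem_nhds
      simpa using hW
    rw [nhds_prod_eq, Filter.mem_prod_iff] at h1
    obtain ⟨A, hA, V, hV, hAV⟩ := h1
    exact ⟨A, hA, V, hV, fun h hh x hx => hAV (Set.mk_mem_prod hh hx)⟩
  choose A hA V hV hAV using key
  obtain ⟨t, -, ht⟩ := hK.elim_nhds_subcover A fun g _ => hA g
  refine ⟨⋂ g ∈ t, V g, (Filter.biInter_finset_mem t).2 fun g _ => hV g, ?_⟩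
  intro g hg x hx
  obtain ⟨g₀, hg₀t, hgA⟩ := Set.mem_iUnion₂.1 (ht hg)
  exact hAV g₀ g hgA x (Set.mem_iInter₂.1 hx g₀ hg₀t)

/-- One step of the Kakutani–Kodaira construction. -/
theorem kk_step {G : Type*} [TopologicalSpace G] [Group G] [IsTopologicalGroup G]
    [LocallyCompactSpace G] [T2Space G]
    {Wprev T : Set G} (hW : Wprev ∈ 𝓝 (1 : G)) (hT : T ∈ 𝓝 (1 : G))
    {K : Set G} (hK : IsCompact K) :
    ∃ V ∈ 𝓝 (1 : G), IsCompact V ∧ V⁻¹ = V ∧ V ⊆ T ∧ V * V ⊆ Wprev ∧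
      ∀ g ∈ K, ∀ x ∈ V, g * x * g⁻¹ ∈ Wprev := by
  obtain ⟨W₁, h1, h1c, h1s, h1m⟩ := exists_closed_nhds_one_inv_eq_mul_subset hW
  obtain ⟨W₂, h2, h2conj⟩ := kk_conj_lemma hW hK
  obtain ⟨C, hCcomp, hCnhds⟩ := exists_compact_mem_nhds (1 : G)
  obtain ⟨F, hF, hFc, hFsub⟩ := exists_mem_nhds_isClosed_subset (Filter.inter_mem h2 hT)
  set S : Set G := C ∩ W₁ ∩ F with hS
  have hScomp : IsCompact S := (hCcomp.inter_right h1c).inter_right hFc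
  have hSclosed : IsClosed S := ((hCcomp.isClosed.inter h1c).inter hFc)
  have hSnhds : S ∈ 𝓝 (1 : G) :=
    Filter.inter_mem (Filter.inter_mem hCnhds h1) hF
  refine ⟨S ∩ S⁻¹, Filter.inter_mem hSnhds (by simpa using inv_mem_nhds_one G hSnhds),
    hScomp.inter_right (hSclosed.inv), by simp [Set.inter_comm], ?_, ?_, ?_⟩
  · exact fun x hx => (hFsub (hx.1.2)).2
  · intro x hx
    obtain ⟨a, ha, b, hb, rfl⟩ := hx
    exact h1m (Set.mul_mem_mul ha.1.1.2 hb.1.1.2)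
  · exact fun g hg x hx => h2conj g hg x (hFsub hx.1.2).1

/-- (Kakutani–Kodaira) In a σ-compact locally compact Hausdorff group, given any sequence
of neighbourhoods of the identity, there is a compact normal subgroup contained in their
intersection with metrizable quotient. -/
theorem stmt_9 {G : Type*} [TopologicalSpace G] [Group G] [IsTopologicalGroup G]
    [SigmaCompactSpace G] [LocallyCompactSpace G] [T2Space G]
    (U : ℕ → Set G) (hU : ∀ n, U n ∈ nhds (1 : G)) :
    ∃ N : Subgroup G, N.Normal ∧ IsCompact (N : Set G) ∧ (N : Set G) ⊆ ⋂ n, U n ∧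
      TopologicalSpace.MetrizableSpace (G ⧸ N) := by
  classical
  set K : ℕ → Set G := compactCovering G with hKdef
  have hKcomp : ∀ n, IsCompact (K n) := isCompact_compactCovering G
  have hKmono : Monotone K := fun m n h => compactCovering_subset G h
  have hKmem : ∀ g : G, ∃ n, g ∈ K n := exists_mem_compactCovering
  -- `Good n V` : the properties of each member of the sequence not referring to the previous one
  set Good : ℕ → Set G → Prop := fun n V =>
    V ∈ 𝓝 (1 : G) ∧ IsCompact V ∧ V⁻¹ = V ∧ V ⊆ U n with hGood
  have hstep : ∀ n (V : Set G), Good n V →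
      ∃ V', Good (n + 1) V' ∧ V' * V' ⊆ V ∧ ∀ g ∈ K n, ∀ x ∈ V', g * x * g⁻¹ ∈ V := by
    intro n V hV
    obtain ⟨V', h1, h2, h3, h4, h5, h6⟩ := kk_step hV.1 (hU (n + 1)) (hKcomp n)
    exact ⟨V', ⟨h1, h2, h3, h4⟩, h5, h6⟩
  choose! f hf1 hf2 hf3 using hstep
  obtain ⟨V₀, hV₀⟩ : ∃ V₀, Good 0 V₀ := by
    obtain ⟨V', h1, h2, h3, h4, _, _⟩ :=
      kk_step (Filter.univ_mem (f := 𝓝 (1 : G))) (hU 0) (hKcomp 0)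
    exact ⟨V', h1, h2, h3, h4⟩
  set V : ℕ → Set G := fun n => Nat.rec V₀ (fun n Vn => f n Vn) n with hVdef
  have hVgood : ∀ n, Good n (V n) := by
    intro n
    induction n with
    | zero => exact hV₀
    | succ n ih => exact hf1 n (V n) ih
  have hVmul : ∀ n, V (n + 1) * V (n + 1) ⊆ V n := fun n => hf2 n (V n) (hVgood n)
  have hVconj : ∀ n, ∀ g ∈ K n, ∀ x ∈ V (n + 1), g * x * g⁻¹ ∈ V n :=
    fun n => hf3 n (V n) (hVgood n)
  have hVone : ∀ n, (1 : G) ∈ V n := fun n => mem_of_mem_nhds (hVgood n).1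
  have hVanti : Antitone V := by
    refine antitone_nat_of_succ_le fun n x hx => ?_
    have : x * 1 ∈ V (n + 1) * V (n + 1) := Set.mul_mem_mul hx (hVone (n + 1))
    simpa using hVmul n this
  -- the subgroup
  set N : Subgroup G :=
    { carrier := ⋂ n, V n
      one_mem' := Set.mem_iInter.2 hVone
      mul_mem' := by
        intro a b ha hb
        rw [Set.mem_iInter] at *
        exact fun n => hVmul n (Set.mul_mem_mul (ha (n + 1)) (hb (n + 1)))
      inv_mem' := by
        intro a ha
        rw [Set.mem_iInter] at *
        intro n
        rw [← (hVgood n).2.2.1]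
        exact Set.inv_mem_inv.2 (ha n) } with hNdef
  have hNcar : (N : Set G) = ⋂ n, V n := rfl
  have hNnormal : N.Normal := by
    constructor
    intro x hx g
    have hx' : ∀ n, x ∈ V n := Set.mem_iInter.1 hx
    rw [← Subgroup.mem_carrier]
    change g * x * g⁻¹ ∈ ⋂ n, V n
    rw [Set.mem_iInter]
    intro m
    obtain ⟨n₀, hn₀⟩ := hKmem g
    have hg : g ∈ K (max n₀ m) := hKmono (le_max_left _ _) hn₀
    have := hVconj (max n₀ m) g hg x (hx' (max n₀ m + 1))
    exact hVanti (le_max_right n₀ m) this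
  have hNcomp : IsCompact (N : Set G) := by
    rw [hNcar]
    exact (hVgood 0).2.1.of_isClosed_subset
      (isClosed_iInter fun n => (hVgood n).2.1.isClosed) (Set.iInter_subset _ 0)
  refine ⟨N, hNnormal, hNcomp, ?_, ?_⟩
  · rw [hNcar]
    exact Set.iInter_mono fun n => (hVgood n).2.2.2
  · -- metrizability of the quotient
    haveI : N.Normal := hNnormal
    haveI : IsClosed (N : Set G) := hNcomp.isClosed
    haveI : T3Space (G ⧸ N) := QuotientGroup.instT3Space N
    -- the images of the `V n` form a countable basis of `𝓝 1` in the quotient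
    have hbasis : (𝓝 (1 : G ⧸ N)).HasBasis (fun _ : ℕ => True)
        (fun n => (QuotientGroup.mk : G → G ⧸ N) '' V n) := by
      constructor
      intro W
      constructor
      · intro hW
        have hpre : ∀ x ∈ ⋂ n, V n, (QuotientGroup.mk : G → G ⧸ N) ⁻¹' W ∈ 𝓝 x := by
          intro x hx
          have hx1 : (QuotientGroup.mk x : G ⧸ N) = 1 := by
            rw [← QuotientGroup.mk_one]
            exact (QuotientGroup.eq).2 (by simpa using N.inv_mem (show x ∈ N from hx))
          exact QuotientGroup.continuous_mk.continuousAt.preimage_mem_nhds (by rwa [hx1])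
        obtain ⟨n, hn⟩ := exists_subset_nhds_of_isCompact
          (fun a b => ⟨max a b, hVanti (le_max_left a b), hVanti (le_max_right a b)⟩)
          (fun n => (hVgood n).2.1) hpre
        exact ⟨n, trivial, Set.image_subset_iff.2 hn⟩
      · rintro ⟨n, -, hn⟩
        refine Filter.mem_of_superset ?_ hn
        rw [show (1 : G ⧸ N) = ((1 : G) : G ⧸ N) from (QuotientGroup.mk_one N).symm,
          QuotientGroup.nhds_eq N 1, Filter.mem_map]
        exact Filter.mem_of_superset (hVgood n).1 (Set.subset_preimage_image _ _)
    haveI : (𝓝 (1 : G ⧸ N)).IsCountablyGenerated := hbasis.isCountablyGenerated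
    letI : UniformSpace (G ⧸ N) := IsTopologicalGroup.rightUniformSpace (G ⧸ N)
    haveI : (uniformity (G ⧸ N)).IsCountablyGenerated := by
      rw [uniformity_eq_comap_nhds_one']
      exact Filter.comap.isCountablyGenerated _ _
    exact UniformSpace.metrizableSpace
end

section
/- Let G be a topological group and H a closed subgroup of G. If H (with the subspace topology) and the quotient space G/H (with the quotient topology) are both first countable, then G is first countable. -/
open Filter Set Topology Pointwise

/-- From any nbhd of 1 we can extract an open symmetric `V` with `V * V ⊆ S`. -/
lemma stmt_10_aux {G : Type*} [TopologicalSpace G] [Group G] [IsTopologicalGroup G]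
    {S : Set G} (hS : S ∈ 𝓝 (1 : G)) :
    ∃ V : Set G, IsOpen V ∧ (1 : G) ∈ V ∧ V⁻¹ = V ∧ V * V ⊆ S := by
  obtain ⟨W, Wo, W1, hW⟩ := exists_open_nhds_one_mul_subset hS
  refine ⟨W ∩ W⁻¹, Wo.inter Wo.inv, ⟨W1, by simpa using W1⟩, by ext x; simp [and_comm], ?_⟩
  exact (Set.mul_subset_mul inter_subset_left inter_subset_left).trans hW

/-- If a closed subgroup `H` of a topological group `G` and the quotient `G/H` are both
first countable, then so is `G`. -/
theorem stmt_10 {G : Type*} [TopologicalSpace G] [Group G] [IsTopologicalGroup G]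
    (H : Subgroup G) (hH : IsClosed (H : Set G))
    (h1 : FirstCountableTopology H)
    (h2 : FirstCountableTopology (G ⧸ H)) :
    FirstCountableTopology G := by
  -- countably generated filters
  have hHcg : (𝓝[(H : Set G)] (1 : G)).IsCountablyGenerated := by
    rw [← map_nhds_subtype_val (⟨1, H.one_mem⟩ : (H : Set G))]
    infer_instance
  obtain ⟨A, hA⟩ := (𝓝[(H : Set G)] (1 : G)).exists_antitone_basis
  obtain ⟨B, hB⟩ := (𝓝 ((1 : G) : G ⧸ H)).exists_antitone_basis
  -- recursive construction of nbhds of 1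
  have step : ∀ S : Set G, IsOpen S → (1 : G) ∈ S → ∀ n : ℕ, ∃ V : Set G,
      IsOpen V ∧ (1 : G) ∈ V ∧ V⁻¹ = V ∧ V * V ⊆ S ∧ V ∩ (H : Set G) ⊆ A n ∧
        (fun g : G => (g : G ⧸ H)) '' V ⊆ B n := by
    intro S So S1 n
    have hAn : A n ∈ 𝓝[(H : Set G)] (1 : G) := hA.mem n
    rw [mem_nhdsWithin] at hAn
    obtain ⟨A', A'o, A'1, hA'⟩ := hAn
    have hBn : (fun g : G => (g : G ⧸ H)) ⁻¹' (B n) ∈ 𝓝 (1 : G) := by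
      have := hB.mem n
      exact continuous_quotient_mk'.continuousAt.preimage_mem_nhds (by exact this)
    obtain ⟨V, Vo, V1, Vsymm, hVsq⟩ := stmt_10_aux
      (Filter.inter_mem (Filter.inter_mem (So.mem_nhds S1) (A'o.mem_nhds A'1)) hBn)
    have hVsub : V ⊆ (S ∩ A') ∩ (fun g : G => (g : G ⧸ H)) ⁻¹' (B n) := fun x hx =>
      hVsq ⟨x, hx, 1, V1, mul_one x⟩
    refine ⟨V, Vo, V1, Vsymm, fun x hx => (hVsq hx).1.1, ?_, ?_⟩
    · exact fun x hx => hA' ⟨(hVsub hx.1).1.2, hx.2⟩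
    · rintro _ ⟨x, hx, rfl⟩; exact (hVsub hx).2
  choose! f fo f1 fsymm fsq fH fB using step
  set U : ℕ → Set G := fun n => Nat.rec Set.univ (fun n Un => f Un n) n with hUdef
  have hU : ∀ n, IsOpen (U n) ∧ (1 : G) ∈ U n := by
    intro n; induction n with
    | zero => exact ⟨isOpen_univ, mem_univ _⟩
    | succ n ih => exact ⟨fo _ ih.1 ih.2 n, f1 _ ih.1 ih.2 n⟩
  have hsq : ∀ n, U (n + 1) * U (n + 1) ⊆ U n := fun n => fsq _ (hU n).1 (hU n).2 n
  have hsymm : ∀ n, (U (n + 1))⁻¹ = U (n + 1) := fun n => fsymm _ (hU n).1 (hU n).2 n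
  have hUH : ∀ n, U (n + 1) ∩ (H : Set G) ⊆ A n := fun n => fH _ (hU n).1 (hU n).2 n
  have hUB : ∀ n, (fun g : G => (g : G ⧸ H)) '' U (n + 1) ⊆ B n :=
    fun n => fB _ (hU n).1 (hU n).2 n
  have hanti : Antitone U := by
    refine antitone_nat_of_succ_le fun n x hx => ?_
    exact hsq n ⟨x, hx, 1, (hU (n + 1)).2, mul_one x⟩
  -- U is a basis of 𝓝 1
  have hbasis : (𝓝 (1 : G)).HasBasis (fun _ : ℕ => True) U := by
    constructor
    intro O
    constructor
    · intro hO
      obtain ⟨V, Vo, V1, Vsymm, hVsq⟩ := stmt_10_aux hO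
      have hVH : V ∈ 𝓝[(H : Set G)] (1 : G) :=
        mem_nhdsWithin_of_mem_nhds (Vo.mem_nhds V1)
      obtain ⟨n₁, -, hn₁⟩ := hA.toHasBasis.mem_iff.mp hVH
      set W : Set G := U (n₁ + 2) ∩ V with hWdef
      have hWnhds : (fun g : G => (g : G ⧸ H)) '' W ∈ 𝓝 ((1 : G) : G ⧸ H) :=
        (QuotientGroup.isOpenMap_coe (N := H)).image_mem_nhds
          (((hU (n₁ + 2)).1.inter Vo).mem_nhds ⟨(hU (n₁ + 2)).2, V1⟩)
      obtain ⟨m, -, hm⟩ := hB.toHasBasis.mem_iff.mp hWnhds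
      refine ⟨max (n₁ + 2) (m + 1), trivial, fun x hx => ?_⟩
      have hx2 : x ∈ U (n₁ + 2) := hanti (le_max_left _ _) hx
      have hxm : x ∈ U (m + 1) := hanti (le_max_right _ _) hx
      have : ((x : G) : G ⧸ H) ∈ (fun g : G => (g : G ⧸ H)) '' W :=
        hm (hUB m ⟨x, hxm, rfl⟩)
      obtain ⟨w, hw, hwx⟩ := this
      have hmem : w⁻¹ * x ∈ H := QuotientGroup.eq.mp hwx
      have hwinv : w⁻¹ ∈ U (n₁ + 2) := by
        rw [← hsymm (n₁ + 1)]; exact Set.inv_mem_inv.mpr hw.1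
      have hh : w⁻¹ * x ∈ U (n₁ + 1) := hsq (n₁ + 1) ⟨w⁻¹, hwinv, x, hx2, rfl⟩
      have hhV : w⁻¹ * x ∈ V := hn₁ (hUH n₁ ⟨hh, hmem⟩)
      have : x ∈ V * V := ⟨w, hw.2, w⁻¹ * x, hhV, by group⟩
      exact hVsq this
    · rintro ⟨n, -, hn⟩
      exact Filter.mem_of_superset ((hU n).1.mem_nhds (hU n).2) hn
  haveI hcg : (𝓝 (1 : G)).IsCountablyGenerated := hbasis.isCountablyGenerated
  refine ⟨fun x => ?_⟩
  rw [← map_mul_left_nhds_one x]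
  infer_instance
end

section
/- (Katetov–Efimov) Let X be a dyadic space, i.e., a compact Hausdorff space for which there exist an index type κ and a continuous surjection from the Cantor cube {0,1}^κ onto X. Then every non-isolated point p of X is the limit of a sequence of distinct points of X; that is, there is an injective sequence (x_n) in X with x_n ≠ p for all n and x_n → p. -/
open Filter Topology

/-- (Katetov–Efimov) In a dyadic space (a compact Hausdorff continuous image of a Cantor
cube), every non-isolated point is the limit of an injective sequence of points distinct
from it. -/
theorem stmt_12 {X : Type*} [TopologicalSpace X] [CompactSpace X] [T2Space X]
    (hdyadic : ∃ (κ : Type) (f : (κ → Bool) → X), Continuous f ∧ Function.Surjective f)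
    (p : X) (hp : ¬ IsOpen ({p} : Set X)) :
    ∃ x : ℕ → X, Function.Injective x ∧ (∀ n, x n ≠ p) ∧
      Filter.Tendsto x Filter.atTop (nhds p) := by
  classical
  obtain ⟨κ, f, hf, hsurj⟩ := hdyadic
  set K : Set (κ → Bool) := f ⁻¹' {p} with hK
  have hKclosed : IsClosed K := isClosed_singleton.preimage hf
  -- K is not open, since f is a closed map and {p} is not open
  have hKnotopen : ¬ IsOpen K := by
    intro h
    apply hp
    have hclosed : IsClosed (f '' Kᶜ) := hf.isClosedMap _ h.isClosed_compl
    have himg : f '' Kᶜ = ({p} : Set X)ᶜ := by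
      rw [hK, ← Set.preimage_compl, Set.image_preimage_eq _ hsurj]
    rw [himg] at hclosed
    simpa using hclosed.isOpen_compl
  -- choose a boundary point q of K
  obtain ⟨q, hqK, hqni⟩ : ∃ q, q ∈ K ∧ q ∉ interior K := by
    by_contra h; push_neg at h
    exact hKnotopen (Set.Subset.antisymm (fun z hz => h z hz) interior_subset ▸
      isOpen_interior)
  have hqcl : q ∈ closure Kᶜ := by rw [closure_compl]; exact hqni
  -- key step: approximating points outside K with finite support relative to q
  have hstep2 : ∀ F : Finset κ, ∃ (y : κ → Bool) (G : Finset κ),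
      y ∉ K ∧ (∀ α ∈ F, y α = q α) ∧ (∀ α ∉ G, y α = q α) := by
    intro F
    have hU : IsOpen (Set.pi (↑F) (fun α => ({q α} : Set Bool))) :=
      isOpen_set_pi F.finite_toSet (fun α _ => isOpen_discrete _)
    have hqU : q ∈ Set.pi (↑F) (fun α => ({q α} : Set Bool)) := fun α _ => rfl
    obtain ⟨y₀, hy₀U, hy₀K⟩ := mem_closure_iff.mp hqcl _ hU hqU
    obtain ⟨I, u, hu, hsub⟩ := isOpen_pi_iff.mp hKclosed.isOpen_compl y₀ hy₀K
    refine ⟨fun α => if α ∈ I then y₀ α else q α, I, ?_, ?_, ?_⟩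
    · have : (fun α => if α ∈ I then y₀ α else q α) ∈ Kᶜ := by
        apply hsub
        intro α hα
        have hα' : α ∈ I := hα
        simp only [if_pos hα']
        exact (hu α hα).2
      exact this
    · intro α hαF
      by_cases hαI : α ∈ I
      · simp only [hαI, if_pos]
        exact hy₀U α hαF
      · simp [hαI]
    · intro α hαI
      simp [hαI]
  choose Y G hYK hYF hYG using hstep2
  -- recursive construction of finite coordinate sets and approximating points
  let Fs : ℕ → Finset κ := fun n =>
    Nat.rec (motive := fun _ => Finset κ) ∅ (fun _ Fn => Fn ∪ G Fn) n
  have hFs : ∀ n, Fs (n + 1) = Fs n ∪ G (Fs n) := fun n => rfl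
  let y : ℕ → κ → Bool := fun n => Y (Fs n)
  have hmono : ∀ m n, m ≤ n → Fs m ⊆ Fs n := by
    intro m n h
    induction h with
    | refl => exact Finset.Subset.refl _
    | step _ ih =>
      refine ih.trans ?_
      rw [hFs]
      exact Finset.subset_union_left
  have hy_tend : Tendsto y atTop (𝓝 q) := by
    rw [tendsto_pi_nhds]
    intro α
    refine Tendsto.congr' ?_ tendsto_const_nhds
    by_cases hall : ∀ n, y n α = q α
    · exact Eventually.of_forall (fun n => (hall n).symm)
    · push_neg at hall
      obtain ⟨n, hn⟩ := hall
      have hαG : α ∈ G (Fs n) := by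
        by_contra h
        exact hn (hYG _ _ h)
      filter_upwards [eventually_ge_atTop (n + 1)] with k hk
      have hαk : α ∈ Fs k := by
        apply hmono (n + 1) k hk
        rw [hFs]
        exact Finset.mem_union_right _ hαG
      exact (hYF (Fs k) α hαk).symm
  set x : ℕ → X := fun n => f (y n) with hx
  have hx_ne : ∀ n, x n ≠ p := by
    intro n h
    exact hYK (Fs n) (by simpa [hK] using h)
  have hx_tend : Tendsto x atTop (𝓝 p) := by
    have hfq : f q = p := by simpa [hK] using hqK
    have := (hf.tendsto q).comp hy_tend
    rwa [hfq] at this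
  -- fibers of x are finite
  have hfib : ∀ n, {m | x m = x n}.Finite := by
    intro n
    by_contra h
    have hinf : {m | x m = x n}.Infinite := h
    have hfreq : ∃ᶠ m in atTop, x m ∈ ({x n} : Set X) := by
      rw [Nat.frequently_atTop_iff_infinite]
      simpa using hinf
    have hcl : p ∈ closure ({x n} : Set X) :=
      mem_closure_of_frequently_of_tendsto hfreq hx_tend
    rw [closure_singleton] at hcl
    exact hx_ne n (by simpa using hcl.symm)
  have hstep : ∀ n : ℕ, ∃ m, n < m ∧ ∀ i ≤ n, x m ≠ x i := by
    intro n
    have hT : {m | ∃ i ≤ n, x m = x i}.Finite := by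
      apply Set.Finite.subset
        (Set.Finite.biUnion (Finset.range (n + 1)).finite_toSet (fun i _ => hfib i))
      intro m hm
      obtain ⟨i, hi, hxi⟩ := hm
      exact Set.mem_biUnion (by simp [Nat.lt_succ_iff, hi]) hxi
    obtain ⟨m, hm, hmn⟩ := hT.infinite_compl.exists_gt n
    exact ⟨m, hmn, fun i hi hxe => hm ⟨i, hi, hxe⟩⟩
  let φ : ℕ → ℕ := fun n =>
    Nat.rec (motive := fun _ => ℕ) 0 (fun _ ih => (hstep ih).choose) n
  have hφ' : ∀ k, φ k < φ (k + 1) ∧ ∀ i ≤ φ k, x (φ (k + 1)) ≠ x i := fun k =>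
    ⟨(hstep (φ k)).choose_spec.1, (hstep (φ k)).choose_spec.2⟩
  have hφmono : StrictMono φ := strictMono_nat_of_lt_succ (fun k => (hφ' k).1)
  refine ⟨x ∘ φ, ?_, fun n => hx_ne _, hx_tend.comp hφmono.tendsto_atTop⟩
  intro i j h
  rcases lt_trichotomy i j with hij | hij | hij
  · exfalso
    cases j with
    | zero => omega
    | succ m =>
      exact (hφ' m).2 (φ i) (hφmono.monotone (by omega)) h.symm
  · exact hij
  · exfalso
    cases i with
    | zero => omega
    | succ m =>
      exact (hφ' m).2 (φ j) (hφmono.monotone (by omega)) h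
end
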